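/- Let (A, d) be a compact metric space with tame growth of covering numbers (for every δ > 0, ε^δ log #(A, d, ε) → 0 as ε → 0). Then the shift space A^ℤ with the metric d'(x,y) = Σ_{n∈ℤ} 2^{-|n|} d(x_n, y_n) also has tame growth of covering numbers. -/

import Mathlib

open Real Filter Set Topology

/-- Minimal cardinality of a cover of `𝒳` by open sets of `ρ`-diameter less than `ε`. -/
noncomputable def coverNum (𝒳 : Type*) [TopologicalSpace 𝒳] (ρ : 𝒳 → 𝒳 → ℝ) (ε : ℝ) : ℕ :=
  sInf {N : ℕ | ∃ U : Fin N → Set 𝒳, (∀ i, IsOpen (U i)) ∧ (∀ x, ∃ i, x ∈ U i) ∧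
    ∀ i, ∀ x ∈ U i, ∀ y ∈ U i, ρ x y < ε}

/-- The metric `d'(x,y) = Σ_{n ∈ ℤ} 2^{-|n|} d(x_n, y_n)` on the shift space `A^ℤ`. -/
noncomputable def dShift {A : Type*} [MetricSpace A] (x y : ℤ → A) : ℝ :=
  ∑' n : ℤ, (2 : ℝ) ^ (-|n|) * dist (x n) (y n)

noncomputable def wz (n : ℤ) : ℝ := (2 : ℝ) ^ (-|n|)

lemma wz_pos (n : ℤ) : 0 < wz n := zpow_pos two_pos _

lemma wz_nat (n : ℕ) : wz n = (1/2 : ℝ) ^ n := by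
  simp [wz, zpow_neg, one_div, inv_pow]

lemma wz_neg_nat (n : ℕ) : wz (-n) = (1/2 : ℝ) ^ n := by
  simp [wz, zpow_neg, one_div, inv_pow]

lemma summable_wz : Summable wz := by
  apply Summable.of_nat_of_neg
  · exact summable_geometric_two.congr fun n => (wz_nat n).symm
  · exact summable_geometric_two.congr fun n => (wz_neg_nat n).symm

lemma tsum_wz : ∑' n : ℤ, wz n = 3 := by
  rw [Summable.tsum_of_nat_of_neg
    (summable_geometric_two.congr fun n => (wz_nat n).symm)
    (summable_geometric_two.congr fun n => (wz_neg_nat n).symm)]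
  have h1 : ∑' n : ℕ, wz n = 2 := by
    rw [tsum_congr fun n : ℕ => wz_nat n, tsum_geometric_two]
  have h2 : ∑' n : ℕ, wz (-(n:ℤ)) = 2 := by
    rw [tsum_congr fun n : ℕ => wz_neg_nat n, tsum_geometric_two]
  rw [h1, h2]
  norm_num [wz]

lemma tail_wz_le (N : ℕ) :
    ∑' n : ↑((Finset.Icc (-(N:ℤ)) N : Finset ℤ) : Set ℤ)ᶜ, wz n
      ≤ 3 * (2:ℝ) ^ (-(N:ℤ)) := by
  set s : Finset ℤ := Finset.Icc (-(N:ℤ)) N with hs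
  have hmem : ∀ n : ↑((s : Finset ℤ) : Set ℤ)ᶜ, (N:ℤ) < (n:ℤ) ∨ (n:ℤ) < -(N:ℤ) := by
    rintro ⟨n, hn⟩
    simp only [Set.mem_compl_iff, Finset.coe_Icc, Set.mem_Icc, hs, Finset.mem_coe,
      Finset.mem_Icc, not_and_or, not_le] at hn
    show (N:ℤ) < n ∨ n < -(N:ℤ)
    omega
  set ψ : ↑((s : Finset ℤ) : Set ℤ)ᶜ → ℤ :=
    fun n => if 0 ≤ (n:ℤ) then (n:ℤ) - N else (n:ℤ) + N with hψ
  have hinj : Function.Injective ψ := by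
    rintro a b hab
    have ha := hmem a; have hb := hmem b
    apply Subtype.ext
    simp only [hψ] at hab
    split_ifs at hab <;> omega
  have habs : ∀ n : ↑((s : Finset ℤ) : Set ℤ)ᶜ, |ψ n| = |(n:ℤ)| - N := by
    intro n
    have := hmem n
    rcases le_or_gt 0 ((n:ℤ)) with h | h
    · have h1 : (N:ℤ) < n := by omega
      simp only [hψ, if_pos h]
      rw [abs_of_nonneg (by omega : (0:ℤ) ≤ (n:ℤ) - N), abs_of_nonneg h]
    · have h1 : (n:ℤ) < -(N:ℤ) := by omega
      simp only [hψ, if_neg (not_le.2 h)]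
      rw [abs_of_nonpos (by omega : (n:ℤ) + N ≤ 0), abs_of_neg h]
      ring
  have key : ∀ n : ↑((s : Finset ℤ) : Set ℤ)ᶜ, wz n ≤ (2:ℝ)^(-(N:ℤ)) * wz (ψ n) := by
    intro n
    rw [wz, wz, ← zpow_add₀ (two_ne_zero), habs n]
    apply le_of_eq
    congr 1
    ring
  have hle := Summable.tsum_le_tsum_of_inj ψ hinj
    (fun c _ => mul_nonneg (by positivity) (wz_pos c).le)
    key (summable_wz.subtype _) (summable_wz.mul_left _)
  calc ∑' n : ↑((s : Finset ℤ) : Set ℤ)ᶜ, wz n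
      ≤ ∑' n : ℤ, (2:ℝ)^(-(N:ℤ)) * wz n := hle
    _ = (2:ℝ)^(-(N:ℤ)) * ∑' n : ℤ, wz n := tsum_mul_left
    _ = 3 * (2:ℝ)^(-(N:ℤ)) := by rw [tsum_wz]; ring

lemma dShift_le {A : Type*} [MetricSpace A] [Nonempty A] {D : ℝ}
    (hD : ∀ a b : A, dist a b ≤ D) (N : ℕ) {ε' : ℝ} (hε' : 0 ≤ ε') (x y : ℤ → A)
    (h : ∀ n ∈ Finset.Icc (-(N:ℤ)) (N:ℤ), dist (x n) (y n) ≤ ε') :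
    dShift x y ≤ 3 * ε' + D * (3 * (2:ℝ)^(-(N:ℤ))) := by
  have hD0 : 0 ≤ D :=
    le_trans dist_nonneg (hD (Classical.arbitrary A) (Classical.arbitrary A))
  set s : Finset ℤ := Finset.Icc (-(N:ℤ)) N with hs
  have hsum : Summable (fun n : ℤ => wz n * dist (x n) (y n)) := by
    apply Summable.of_nonneg_of_le (fun n => mul_nonneg (wz_pos n).le dist_nonneg) (fun n => ?_)
      (summable_wz.mul_right D)
    exact mul_le_mul_of_nonneg_left (hD _ _) (wz_pos n).le
  have hds : dShift x y = ∑' n : ℤ, wz n * dist (x n) (y n) := rfl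
  rw [hds, ← Summable.sum_add_tsum_compl (s := s) hsum]
  have h1 : ∑ n ∈ s, wz n * dist (x n) (y n) ≤ 3 * ε' := by
    calc ∑ n ∈ s, wz n * dist (x n) (y n)
        ≤ ∑ n ∈ s, wz n * ε' :=
          Finset.sum_le_sum fun n hn => mul_le_mul_of_nonneg_left (h n hn) (wz_pos n).le
      _ = (∑ n ∈ s, wz n) * ε' := by rw [Finset.sum_mul]
      _ ≤ 3 * ε' := by
          apply mul_le_mul_of_nonneg_right _ hε'
          have := Summable.sum_le_tsum s (fun n _ => (wz_pos n).le) summable_wz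
          rw [tsum_wz] at this; exact this
  have h2 : ∑' n : ↑((s : Finset ℤ) : Set ℤ)ᶜ, wz n * dist (x (n:ℤ)) (y (n:ℤ))
      ≤ D * (3 * (2:ℝ)^(-(N:ℤ))) := by
    calc ∑' n : ↑((s : Finset ℤ) : Set ℤ)ᶜ, wz n * dist (x (n:ℤ)) (y (n:ℤ))
        ≤ ∑' n : ↑((s : Finset ℤ) : Set ℤ)ᶜ, wz n * D := by
          apply Summable.tsum_le_tsum _ (hsum.subtype _) ((summable_wz.mul_right D).subtype _)
          exact fun n => mul_le_mul_of_nonneg_left (hD _ _) (wz_pos _).le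
      _ = (∑' n : ↑((s : Finset ℤ) : Set ℤ)ᶜ, wz n) * D := tsum_mul_right
      _ ≤ (3 * (2:ℝ)^(-(N:ℤ))) * D :=
          mul_le_mul_of_nonneg_right (tail_wz_le N) hD0
      _ = D * (3 * (2:ℝ)^(-(N:ℤ))) := mul_comm _ _
  exact add_le_add h1 h2

lemma coverNum_le_card {𝒳 : Type*} [TopologicalSpace 𝒳] {ρ : 𝒳 → 𝒳 → ℝ} {ε : ℝ}
    {ι : Type*} [Fintype ι] (U : ι → Set 𝒳) (ho : ∀ i, IsOpen (U i))
    (hc : ∀ x, ∃ i, x ∈ U i) (hd : ∀ i, ∀ x ∈ U i, ∀ y ∈ U i, ρ x y < ε) :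
    coverNum 𝒳 ρ ε ≤ Fintype.card ι := by
  apply Nat.sInf_le
  refine ⟨fun j => U ((Fintype.equivFin ι).symm j), fun j => ho _, fun x => ?_, fun j => hd _⟩
  obtain ⟨i, hi⟩ := hc x
  exact ⟨Fintype.equivFin ι i, by simpa using hi⟩

lemma coverNum_spec (A : Type*) [MetricSpace A] [CompactSpace A] {ε : ℝ} (hε : 0 < ε) :
    ∃ U : Fin (coverNum A dist ε) → Set A, (∀ i, IsOpen (U i)) ∧ (∀ x, ∃ i, x ∈ U i) ∧
      ∀ i, ∀ x ∈ U i, ∀ y ∈ U i, dist x y < ε := by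
  have hne : {N : ℕ | ∃ U : Fin N → Set A, (∀ i, IsOpen (U i)) ∧ (∀ x, ∃ i, x ∈ U i) ∧
      ∀ i, ∀ x ∈ U i, ∀ y ∈ U i, dist x y < ε}.Nonempty := by
    obtain ⟨t, ht⟩ := IsCompact.elim_finite_subcover (isCompact_univ (X := A))
      (fun a : A => Metric.ball a (ε/3)) (fun a => Metric.isOpen_ball)
      (fun x _ => Set.mem_iUnion.2 ⟨x, Metric.mem_ball_self (by linarith)⟩)
    refine ⟨t.card, fun i => Metric.ball ((t.equivFin.symm i : ↥t) : A) (ε/3),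
      fun i => Metric.isOpen_ball, fun x => ?_, fun i x hx y hy => ?_⟩
    · obtain ⟨a, ha, hxa⟩ := Set.mem_iUnion₂.1 (ht (Set.mem_univ x))
      exact ⟨t.equivFin ⟨a, ha⟩, by simpa using hxa⟩
    · rw [Metric.mem_ball] at hx hy
      have h3 := dist_triangle x ((t.equivFin.symm i : ↥t) : A) y
      have h4 : dist ((t.equivFin.symm i : ↥t) : A) y
          = dist y ((t.equivFin.symm i : ↥t) : A) := dist_comm _ _
      linarith
  exact Nat.sInf_mem hne

lemma coverNum_shift_le {A : Type*} [MetricSpace A] [CompactSpace A] [Nonempty A]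
    {D : ℝ} (hD : ∀ a b : A, dist a b ≤ D)
    {ε : ℝ} (hε : 0 < ε) {N : ℕ} (hN : D * (3 * (2:ℝ)^(-(N:ℤ))) ≤ ε / 2) :
    coverNum (ℤ → A) dShift ε ≤ (coverNum A dist (ε/12)) ^ (2*N+1) := by
  set M := coverNum A dist (ε/12) with hM
  set s : Finset ℤ := Finset.Icc (-(N:ℤ)) N with hs
  obtain ⟨UA, ho, hc, hd⟩ := coverNum_spec A (by positivity : (0:ℝ) < ε/12)
  have hcard : Fintype.card (↥s → Fin M) = M ^ (2*N+1) := by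
    rw [Fintype.card_fun, Fintype.card_fin, Fintype.card_coe, hs, Int.card_Icc]
    congr 1
    omega
  have hle : coverNum (ℤ → A) dShift ε ≤ Fintype.card (↥s → Fin M) := by
    refine coverNum_le_card (𝒳 := ℤ → A) (ρ := dShift) (ε := ε)
      (fun f : ↥s → Fin M => {x : ℤ → A | ∀ n : ↥s, x n ∈ UA (f n)}) ?_ ?_ ?_
    · intro f
      show IsOpen {x : ℤ → A | ∀ n : ↥s, x n ∈ UA (f n)}
      have hV : {x : ℤ → A | ∀ n : ↥s, x n ∈ UA (f n)}
          = ⋂ n : ↥s, (fun x : ℤ → A => x n) ⁻¹' UA (f n) := by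
        ext x; simp [Set.mem_iInter]
      rw [hV]
      refine isOpen_iInter_of_finite fun n => ?_
      exact IsOpen.preimage (continuous_apply (n : ℤ)) (ho (f n))
    · intro x
      exact ⟨fun n => (hc (x n)).choose, fun n => (hc (x n)).choose_spec⟩
    · intro f x hx y hy
      have hb : ∀ n ∈ Finset.Icc (-(N:ℤ)) (N:ℤ), dist (x n) (y n) ≤ ε/12 := by
        intro n hn
        exact (hd (f ⟨n, hn⟩) _ (hx ⟨n, hn⟩) _ (hy ⟨n, hn⟩)).le
      have := dShift_le hD N (by positivity) x y hb
      linarith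
  exact hcard ▸ hle

lemma log_natCast_mono {a b : ℕ} (h : a ≤ b) : Real.log a ≤ Real.log b := by
  rcases Nat.eq_zero_or_pos a with rfl | ha
  · simpa using Real.log_natCast_nonneg b
  · exact Real.log_le_log (by exact_mod_cast ha) (by exact_mod_cast h)

/-- If a compact metric space `(A, d)` has tame growth of covering numbers, then so does
the shift space `(A^ℤ, d')`. -/
theorem shift_space_tame_growth {A : Type*} [MetricSpace A] [CompactSpace A]
    (htame : ∀ δ : ℝ, 0 < δ →
      Tendsto (fun ε : ℝ => ε ^ δ * Real.log (coverNum A dist ε)) (𝓝[>] (0 : ℝ)) (𝓝 0)) :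
    ∀ δ : ℝ, 0 < δ →
      Tendsto (fun ε : ℝ => ε ^ δ * Real.log (coverNum (ℤ → A) dShift ε))
        (𝓝[>] (0 : ℝ)) (𝓝 0) := by
  intro δ hδ
  rcases isEmpty_or_nonempty A with hA | hA
  · have h0 : ∀ ε : ℝ, coverNum (ℤ → A) dShift ε = 0 := by
      intro ε
      have : (0:ℕ) ∈ {N : ℕ | ∃ U : Fin N → Set (ℤ → A), (∀ i, IsOpen (U i)) ∧
          (∀ x, ∃ i, x ∈ U i) ∧ ∀ i, ∀ x ∈ U i, ∀ y ∈ U i, dShift x y < ε} :=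
        ⟨Fin.elim0, fun i => i.elim0, fun x => (IsEmpty.false (x 0)).elim, fun i => i.elim0⟩
      exact Nat.eq_zero_of_le_zero (Nat.sInf_le this)
    simp only [h0, Nat.cast_zero, Real.log_zero, mul_zero]
    exact tendsto_const_nhds
  obtain ⟨D, hD⟩ : ∃ D : ℝ, ∀ a b : A, dist a b ≤ D := by
    obtain ⟨C, hC⟩ := Metric.isBounded_iff.1 (isCompact_univ (X := A)).isBounded
    exact ⟨C, fun a b => hC (Set.mem_univ a) (Set.mem_univ b)⟩
  have hD0 : 0 ≤ D :=
    le_trans dist_nonneg (hD (Classical.arbitrary A) (Classical.arbitrary A))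
  set C : ℝ := 6*D + 6 with hCdef
  have hC : 0 < C := by positivity
  set Nf : ℝ → ℕ := fun ε => ⌈Real.logb 2 (C/ε)⌉₊ with hNf
  have hNbound : ∀ ε : ℝ, 0 < ε → D * (3 * (2:ℝ)^(-(Nf ε : ℤ))) ≤ ε / 2 := by
    intro ε hε
    have hpow : C/ε ≤ (2:ℝ) ^ (Nf ε : ℕ) := by
      have h1 : C/ε = (2:ℝ) ^ (Real.logb 2 (C/ε)) :=
        (Real.rpow_logb two_pos (by norm_num) (div_pos hC hε)).symm
      have h2 : (2:ℝ) ^ (Real.logb 2 (C/ε)) ≤ (2:ℝ) ^ ((Nf ε : ℕ) : ℝ) :=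
        (Real.rpow_le_rpow_left_iff (by norm_num)).2 (Nat.le_ceil _)
      rw [Real.rpow_natCast] at h2
      linarith [h1 ▸ h2]
    have hinv : (2:ℝ)^(-(Nf ε : ℤ)) ≤ ε / C := by
      rw [zpow_neg, zpow_natCast]
      have := inv_anti₀ (div_pos hC hε) hpow
      rwa [inv_div] at this
    have hstep : D * (3 * (2:ℝ)^(-(Nf ε : ℤ))) ≤ D * (3 * (ε / C)) := by
      apply mul_le_mul_of_nonneg_left _ hD0
      exact mul_le_mul_of_nonneg_left hinv (by norm_num)
    refine hstep.trans ?_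
    have h3D : 3 * D ≤ C / 2 := by rw [hCdef]; linarith
    calc D * (3 * (ε / C)) = (3 * D) * (ε / C) := by ring
      _ ≤ (C / 2) * (ε / C) := by
          apply mul_le_mul_of_nonneg_right h3D (by positivity)
      _ = ε / 2 := by field_simp
  have key : ∀ ε : ℝ, 0 < ε →
      coverNum (ℤ → A) dShift ε ≤ (coverNum A dist (ε/12)) ^ (2 * Nf ε + 1) :=
    fun ε hε => coverNum_shift_le hD hε (hNbound ε hε)
  have keylog : ∀ ε : ℝ, 0 < ε →
      Real.log (coverNum (ℤ → A) dShift ε) ≤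
        (2 * (Nf ε : ℝ) + 1) * Real.log (coverNum A dist (ε/12)) := by
    intro ε hε
    calc Real.log (coverNum (ℤ → A) dShift ε)
        ≤ Real.log (((coverNum A dist (ε/12)) ^ (2 * Nf ε + 1) : ℕ)) :=
          log_natCast_mono (key ε hε)
      _ = (2 * (Nf ε : ℝ) + 1) * Real.log (coverNum A dist (ε/12)) := by
          push_cast
          rw [Real.log_pow]
          push_cast
          ring
  have h1 : Tendsto (fun ε : ℝ => ε ^ (δ/2)) (𝓝[>] (0:ℝ)) (𝓝 0) := by
    have hcont : ContinuousAt (fun x : ℝ => x ^ (δ/2)) 0 :=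
      Real.continuousAt_rpow_const 0 (δ/2) (Or.inr (by positivity))
    have := hcont.tendsto
    rw [Real.zero_rpow (by positivity : (0:ℝ) < δ/2).ne'] at this
    exact this.mono_left nhdsWithin_le_nhds
  have h2 : Tendsto (fun ε : ℝ => Real.log ε * ε ^ (δ/2)) (𝓝[>] (0:ℝ)) (𝓝 0) :=
    tendsto_log_mul_rpow_nhdsGT_zero (half_pos hδ)
  have hg1 : Tendsto (fun ε : ℝ =>
      ε^(δ/2) * (2*((Real.log C - Real.log ε)/Real.log 2) + 3)) (𝓝[>] (0:ℝ)) (𝓝 0) := by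
    have ha := (h1.const_mul (2*Real.log C/Real.log 2 + 3)).sub
      (h2.const_mul (2/Real.log 2))
    simp only [mul_zero, sub_zero] at ha
    apply ha.congr
    intro ε
    ring
  have hmap : Tendsto (fun ε : ℝ => ε/12) (𝓝[>] (0:ℝ)) (𝓝[>] (0:ℝ)) := by
    apply tendsto_nhdsWithin_of_tendsto_nhds_of_eventually_within
    · have h' : Tendsto (fun x : ℝ => x/12) (𝓝 (0:ℝ)) (𝓝 ((0:ℝ)/12)) :=
        tendsto_id.div_const 12
      have h'' : Tendsto (fun x : ℝ => x/12) (𝓝 (0:ℝ)) (𝓝 (0:ℝ)) := by simpa using h'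
      exact h''.mono_left nhdsWithin_le_nhds
    · filter_upwards [self_mem_nhdsWithin] with ε (hε : ε ∈ Ioi (0:ℝ))
      exact div_pos (show (0:ℝ) < ε from hε) (by norm_num)
  have hg2' := (htame (δ/2) (half_pos hδ)).comp hmap
  have hg2 : Tendsto (fun ε : ℝ => ε^(δ/2) * Real.log (coverNum A dist (ε/12)))
      (𝓝[>] (0:ℝ)) (𝓝 0) := by
    have h' := hg2'.const_mul ((12:ℝ)^(δ/2))
    rw [mul_zero] at h'
    apply h'.congr'
    filter_upwards [self_mem_nhdsWithin] with ε (hε : (0:ℝ) < ε)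
    show (12:ℝ)^(δ/2) * ((ε/12)^(δ/2) * Real.log (coverNum A dist (ε/12))) = _
    rw [← mul_assoc, ← Real.mul_rpow (by norm_num) (by positivity)]
    congr 2
    ring
  apply squeeze_zero' ?_ ?_ (by simpa using hg1.mul hg2)
  · filter_upwards [self_mem_nhdsWithin] with ε (hε : (0:ℝ) < ε)
    exact mul_nonneg (Real.rpow_nonneg hε.le δ) (Real.log_natCast_nonneg _)
  · filter_upwards [Ioo_mem_nhdsGT_of_mem (⟨le_rfl, hC⟩ : (0:ℝ) ∈ Ico 0 C)]
      with ε hε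
    obtain ⟨hε0, hεC⟩ := hε
    have hNle : (2 * (Nf ε : ℝ) + 1)
        ≤ 2*((Real.log C - Real.log ε)/Real.log 2) + 3 := by
      have hlb : 0 ≤ Real.logb 2 (C/ε) :=
        Real.logb_nonneg (by norm_num) ((one_le_div hε0).2 hεC.le)
      have hceil : (Nf ε : ℝ) < Real.logb 2 (C/ε) + 1 := Nat.ceil_lt_add_one hlb
      have hlogb : Real.logb 2 (C/ε) = (Real.log C - Real.log ε)/Real.log 2 := by
        rw [Real.logb, Real.log_div hC.ne' hε0.ne']
      rw [← hlogb]
      linarith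
    have hMlog : 0 ≤ Real.log (coverNum A dist (ε/12)) := Real.log_natCast_nonneg _
    have hsplit : ε^δ = ε^(δ/2) * ε^(δ/2) := by
      rw [← Real.rpow_add hε0]; norm_num
    calc ε^δ * Real.log (coverNum (ℤ → A) dShift ε)
        ≤ ε^δ * ((2 * (Nf ε : ℝ) + 1) * Real.log (coverNum A dist (ε/12))) :=
          mul_le_mul_of_nonneg_left (keylog ε hε0) (Real.rpow_nonneg hε0.le δ)
      _ ≤ ε^δ * ((2*((Real.log C - Real.log ε)/Real.log 2) + 3)
            * Real.log (coverNum A dist (ε/12))) := by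
          apply mul_le_mul_of_nonneg_left _ (Real.rpow_nonneg hε0.le δ)
          exact mul_le_mul_of_nonneg_right hNle hMlog
      _ = (ε^(δ/2) * (2*((Real.log C - Real.log ε)/Real.log 2) + 3))
            * (ε^(δ/2) * Real.log (coverNum A dist (ε/12))) := by
          rw [hsplit]; ring
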